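/- In the setting of Theorem 4.4's proof: if property (⊛) holds — for each U⃗-tree T ⊆ T̃, each k, and the unique i < p_{n_k} with A_i = T↾n_k, and every j ≤ k: j ∈ f([T]) iff j ∈ f([T̃ ∩ B̂^{n_k}_i]) — then f is basic on the U⃗-trees contained in T̃; i.e., the map f̂(T↾n_k) := f([T̃ ∩ B̂^{n_k}_i]) ∩ (k+1) is level preserving, end-extension preserving, monotone, and generates f. -/
import Mathlib


/-- `a` is an initial segment of `b` (with respect to increasing enumerations). -/
def FinInitSeg (a b : Finset ℕ) : Prop :=
  a ⊆ b ∧ ∀ x ∈ b, ∀ y ∈ a, x ≤ y → x ∈ a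

/-- `a` is an initial segment of the (infinite) set `X`. -/
def FinInitSegSet (a : Finset ℕ) (X : Set ℕ) : Prop :=
  (↑a : Set ℕ) ⊆ X ∧ ∀ x ∈ X, ∀ y ∈ a, x ≤ y → x ∈ a

/-- `B` is a front on `I`. -/
def IsFront (I : Set ℕ) (B : Set (Finset ℕ)) : Prop :=
  (∀ b ∈ B, (↑b : Set ℕ) ⊆ I) ∧
  (∀ a ∈ B, ∀ b ∈ B, FinInitSeg a b → a = b) ∧
  (∀ X : Set ℕ, X ⊆ I → X.Infinite → ∃ b ∈ B, FinInitSegSet b X)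

/-- `B` is a flat-top front on `I`. -/
def IsFlatTop (I : Set ℕ) (B : Set (Finset ℕ)) : Prop :=
  IsFront I B ∧ B ≠ {(∅ : Finset ℕ)} ∧
  (B = {c : Finset ℕ | c.card = 1 ∧ (↑c : Set ℕ) ⊆ I} ∨
    ((∀ b ∈ B, 2 ≤ b.card) ∧
     ∀ b ∈ B, ∀ m : ℕ, b.max = (m : WithBot ℕ) →
       ((∀ c ∈ B, FinInitSeg (b.erase m) c → b.erase m ≠ c →
           ∃ x ∈ I, (∀ y ∈ b.erase m, y < x) ∧ c = insert x (b.erase m)) ∧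
        (∀ x ∈ I, (∀ y ∈ b.erase m, y < x) → insert x (b.erase m) ∈ B))))

/-- `B̂`: the tree of all initial segments of members of `B`. -/
def Bhat (B : Set (Finset ℕ)) : Set (Finset ℕ) :=
  {a | ∃ b ∈ B, FinInitSeg a b}

/-- A `U⃗`-tree over the front `B`. -/
def IsUTree (B : Set (Finset ℕ)) (Uc : Finset ℕ → Ultrafilter ℕ)
    (T : Set (Finset ℕ)) : Prop :=
  T ⊆ Bhat B ∧ ∅ ∈ T ∧
  (∀ b ∈ T, ∀ a : Finset ℕ, FinInitSeg a b → a ∈ T) ∧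
  (∀ c ∈ T, c ∈ Bhat B \ B → {n : ℕ | insert n c ∈ T} ∈ Uc c)

/-- `[T]`: the set of maximal branches through `T`. -/
def maxBr (T : Set (Finset ℕ)) : Set (Finset ℕ) :=
  {c | c ∈ T ∧ ∀ c' ∈ T, FinInitSeg c c' → c = c'}

/-- `U` is a nonprincipal ultrafilter. -/
def NonPrincipal (U : Ultrafilter ℕ) : Prop := ∀ a : ℕ, U ≠ pure a

/-- `T↾k`: the members of `T` with all entries below `k`. -/
def Trestrict (T : Set (Finset ℕ)) (k : ℕ) : Set (Finset ℕ) :=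
  {a | a ∈ T ∧ ∀ x ∈ a, x < k}

/-- `B̂^k_A`: the maximal tree whose restriction below `k` is `A`, i.e. `A` together
with all `b ∈ B̂` properly end-extending some `a ∈ A` with `min(b \ a) > k`. -/
def BhatKI (B : Set (Finset ℕ)) (k : ℕ) (A : Set (Finset ℕ)) : Set (Finset ℕ) :=
  A ∪ {b | b ∈ Bhat B ∧ ∃ a ∈ A, FinInitSeg a b ∧ a ≠ b ∧
        ∀ x ∈ b, x ∉ a → k < x}

lemma fis_trans {a b c : Finset ℕ} (h1 : FinInitSeg a b) (h2 : FinInitSeg b c) :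
    FinInitSeg a c :=
  ⟨h1.1.trans h2.1, fun x hx y hy hxy => h1.2 x (h2.2 x hx y (h1.1 hy) hxy) y hy hxy⟩

lemma fis_insert (c : Finset ℕ) (x : ℕ) (h : ∀ y ∈ c, y < x) :
    FinInitSeg c (insert x c) := by
  refine ⟨Finset.subset_insert x c, fun z hz y hy hzy => ?_⟩
  rcases Finset.mem_insert.mp hz with rfl | hzc
  · exact absurd (lt_of_lt_of_le (h y hy) hzy) (lt_irrefl y)
  · exact hzc

lemma fis_comparable {a a' b : Finset ℕ} (h : FinInitSeg a b) (h' : FinInitSeg a' b) :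
    FinInitSeg a a' ∨ FinInitSeg a' a := by
  have hsub : a ⊆ a' ∨ a' ⊆ a := by
    by_contra hcon
    push_neg at hcon
    obtain ⟨x, hx, hx'⟩ := Finset.not_subset.mp hcon.1
    obtain ⟨y, hy, hy'⟩ := Finset.not_subset.mp hcon.2
    rcases le_total x y with hle | hle
    · exact hx' (h'.2 x (h.1 hx) y hy hle)
    · exact hy' (h.2 y (h'.1 hy) x hx hle)
  rcases hsub with hs | hs
  · exact Or.inl ⟨hs, fun x hx y hy hxy => h.2 x (h'.1 hx) y hy hxy⟩
  · exact Or.inr ⟨hs, fun x hx y hy hxy => h'.2 x (h.1 hx) y hy hxy⟩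

lemma np_mem_gt (U : Ultrafilter ℕ) (hU : NonPrincipal U) (N : ℕ) :
    {x : ℕ | N < x} ∈ U := by
  by_contra h
  have h2 : {x : ℕ | N < x}ᶜ ∈ U := Ultrafilter.compl_mem_iff_notMem.mpr h
  have hfin : ({x : ℕ | N < x}ᶜ).Finite := by
    have he : {x : ℕ | N < x}ᶜ = Set.Iic N := by ext z; simp [not_lt]
    rw [he]; exact Set.finite_Iic N
  obtain ⟨a, -, ha⟩ := Ultrafilter.eq_pure_of_finite_mem hfin h2
  exact hU a ha

lemma maxBr_utree {I : Set ℕ} {B : Set (Finset ℕ)} (hfront : IsFront I B)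
    {Uc : Finset ℕ → Ultrafilter ℕ} (hUc : ∀ c, NonPrincipal (Uc c))
    {T : Set (Finset ℕ)} (hT : IsUTree B Uc T) :
    maxBr T = T ∩ B := by
  ext c
  constructor
  · rintro ⟨hcT, hmax⟩
    refine ⟨hcT, ?_⟩
    by_contra hcB
    have hS : {x | insert x c ∈ T} ∈ Uc c := hT.2.2.2 c hcT ⟨hT.1 hcT, hcB⟩
    have hgt := np_mem_gt (Uc c) (hUc c) (c.sup id)
    obtain ⟨x, hx1, hx2⟩ := Ultrafilter.nonempty_of_mem (Filter.inter_mem hS hgt)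
    have hlt : ∀ y ∈ c, y < x := fun y hy =>
      lt_of_le_of_lt (Finset.le_sup (f := id) hy) hx2
    have heq := hmax (insert x c) hx1 (fis_insert c x hlt)
    have hxc : x ∉ c := fun hxc => lt_irrefl x (hlt x hxc)
    exact hxc (heq ▸ Finset.mem_insert_self x c)
  · rintro ⟨hcT, hcB⟩
    refine ⟨hcT, fun c' hc' hfis => ?_⟩
    obtain ⟨b, hbB, hc'b⟩ := hT.1 hc'
    have hcb : c = b := hfront.2.1 c hcB b hbB (fis_trans hfis hc'b)
    exact subset_antisymm hfis.1 (by rw [hcb]; exact hc'b.1)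

lemma Trestrict_Trestrict (T : Set (Finset ℕ)) {k l : ℕ} (h : k ≤ l) :
    Trestrict (Trestrict T l) k = Trestrict T k := by
  ext b
  constructor
  · rintro ⟨⟨h1, _⟩, h3⟩; exact ⟨h1, h3⟩
  · rintro ⟨h1, h3⟩
    exact ⟨⟨h1, fun x hx => lt_of_lt_of_le (h3 x hx) h⟩, h3⟩

lemma BhatKI_mono (B : Set (Finset ℕ)) (m : ℕ) {A A' : Set (Finset ℕ)}
    (h : A ⊆ A') : BhatKI B m A ⊆ BhatKI B m A' := by
  rintro b (hb | ⟨h1, a, ha, h2⟩)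
  · exact Or.inl (h hb)
  · exact Or.inr ⟨h1, a, h ha, h2⟩

lemma utree_BhatKI {I : Set ℕ} {B : Set (Finset ℕ)} (hfront : IsFront I B)
    {Uc : Finset ℕ → Ultrafilter ℕ} (hUc : ∀ c, NonPrincipal (Uc c))
    {Ttil T : Set (Finset ℕ)}
    (hTtil : IsUTree B Uc Ttil) (hT : IsUTree B Uc T) (hTs : T ⊆ Ttil) (m : ℕ) :
    IsUTree B Uc (Ttil ∩ BhatKI B m (Trestrict T m)) ∧
      Trestrict (Ttil ∩ BhatKI B m (Trestrict T m)) m = Trestrict T m := by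
  constructor
  · refine ⟨fun b hb => hTtil.1 hb.1,
      ⟨hTtil.2.1, Or.inl ⟨hT.2.1, by simp⟩⟩, ?_, ?_⟩
    · -- closed under initial segments
      rintro b ⟨hbTtil, hbK⟩ a hab
      refine ⟨hTtil.2.2.1 b hbTtil a hab, ?_⟩
      rcases hbK with hbA | ⟨hbBhat, a0, ha0, ha0b, hne, hnew⟩
      · exact Or.inl ⟨hT.2.2.1 b hbA.1 a hab, fun x hx => hbA.2 x (hab.1 hx)⟩
      · rcases fis_comparable hab ha0b with h1 | h2
        · exact Or.inl ⟨hT.2.2.1 a0 ha0.1 a h1, fun x hx => ha0.2 x (h1.1 hx)⟩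
        · by_cases heq : a0 = a
          · exact Or.inl (heq ▸ ha0)
          · exact Or.inr ⟨hTtil.1 (hTtil.2.2.1 b hbTtil a hab), a0, ha0, h2, heq,
              fun x hx hxa0 => hnew x (hab.1 hx) hxa0⟩
    · -- successor condition
      rintro c ⟨hcTtil, hcK⟩ hcBB
      have hS1 : {x | insert x c ∈ Ttil} ∈ Uc c := hTtil.2.2.2 c hcTtil hcBB
      have hgt := np_mem_gt (Uc c) (hUc c) (max (c.sup id) m)
      refine Filter.mem_of_superset (Filter.inter_mem hS1 hgt) ?_
      rintro x ⟨hx1, hx2⟩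
      have hxc : ∀ y ∈ c, y < x := fun y hy =>
        lt_of_le_of_lt (le_trans (Finset.le_sup (f := id) hy) (le_max_left _ _)) hx2
      have hxm : m < x := lt_of_le_of_lt (le_max_right _ _) hx2
      have hxnc : x ∉ c := fun h => lt_irrefl x (hxc x h)
      have hfis := fis_insert c x hxc
      refine ⟨hx1, ?_⟩
      rcases hcK with hcA | ⟨hcBhat, a0, ha0, ha0c, hne, hnew⟩
      · refine Or.inr ⟨hTtil.1 hx1, c, hcA, hfis, fun h => hxnc (h ▸ Finset.mem_insert_self x c), ?_⟩
        intro y hy hyc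
        rcases Finset.mem_insert.mp hy with rfl | hyc'
        · exact hxm
        · exact absurd hyc' hyc
      · refine Or.inr ⟨hTtil.1 hx1, a0, ha0, fis_trans ha0c hfis, ?_, ?_⟩
        · intro h
          exact hxnc (ha0c.1 (h ▸ Finset.mem_insert_self x c))
        · intro y hy hya0
          rcases Finset.mem_insert.mp hy with rfl | hyc'
          · exact hxm
          · exact hnew y hyc' hya0
  · -- restriction equality
    ext b
    constructor
    · rintro ⟨⟨hbTtil, hbK⟩, hlt⟩
      rcases hbK with hbA | ⟨_, a0, ha0, ha0b, hne, hnew⟩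
      · exact hbA
      · exfalso
        have hns : ¬ b ⊆ a0 := fun h => hne (subset_antisymm ha0b.1 h)
        obtain ⟨x, hxb, hxa0⟩ := Finset.not_subset.mp hns
        exact absurd (hlt x hxb) (not_lt.mpr (le_of_lt (hnew x hxb hxa0)))
    · intro hb
      exact ⟨⟨hTs hb.1, Or.inl hb⟩, hb.2⟩

/-- Claim 1 of the proof of Theorem 4.4: under property (⊛), the map
`f̂(T↾n_k) := f([T̃ ∩ B̂^{n_k}_i]) ∩ (k+1)` (where `A_i = T↾n_k`) is level
preserving, end-extension preserving, monotone, and generates `f` on the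
`U⃗`-trees contained in `T̃`. -/
theorem circledast_implies_basic
    (B : Set (Finset ℕ)) (hB : IsFlatTop Set.univ B)
    (Uc : Finset ℕ → Ultrafilter ℕ) (hUc : ∀ c, NonPrincipal (Uc c))
    (Ttil : Set (Finset ℕ)) (hTtil : IsUTree B Uc Ttil)
    (f : Set (Finset ℕ) → Set ℕ)
    (hfmono : ∀ X Y : Set (Finset ℕ), X ⊆ Y → f X ⊆ f Y)
    (n : ℕ → ℕ) (hn : StrictMono n)
    (A : ℕ → Set (Finset ℕ)) (p : ℕ → ℕ)
    (hA : ∀ T : Set (Finset ℕ), IsUTree B Uc T → T ⊆ Ttil → ∀ k : ℕ,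
      ∃! i : ℕ, i < p (n k) ∧ A i = Trestrict T (n k))
    (hstar : ∀ T : Set (Finset ℕ), IsUTree B Uc T → T ⊆ Ttil → ∀ k : ℕ,
      ∀ i : ℕ, i < p (n k) → A i = Trestrict T (n k) → ∀ j ≤ k,
        (j ∈ f (maxBr T) ↔ j ∈ f (maxBr (Ttil ∩ BhatKI B (n k) (A i)))))
    (fh : Set (Finset ℕ) → Set ℕ)
    (hfh : ∀ T : Set (Finset ℕ), IsUTree B Uc T → T ⊆ Ttil → ∀ k : ℕ,
      ∀ i : ℕ, i < p (n k) → A i = Trestrict T (n k) →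
        fh (Trestrict T (n k)) =
          f (maxBr (Ttil ∩ BhatKI B (n k) (A i))) ∩ Set.Iic k) :
    (∀ T : Set (Finset ℕ), IsUTree B Uc T → T ⊆ Ttil → ∀ k : ℕ,
      fh (Trestrict T (n k)) ⊆ Set.Iic k) ∧
    (∀ T : Set (Finset ℕ), IsUTree B Uc T → T ⊆ Ttil → ∀ k l : ℕ, k ≤ l →
      fh (Trestrict T (n k)) = fh (Trestrict T (n l)) ∩ Set.Iic k) ∧
    (∀ S T : Set (Finset ℕ), IsUTree B Uc S → IsUTree B Uc T →
      S ⊆ Ttil → T ⊆ Ttil → ∀ k l : ℕ, k ≤ l →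
        Trestrict S (n k) ⊆ Trestrict T (n l) →
        fh (Trestrict S (n k)) ⊆ fh (Trestrict T (n l))) ∧
    (∀ T : Set (Finset ℕ), IsUTree B Uc T → T ⊆ Ttil →
      f (maxBr T) = ⋃ k : ℕ, fh (Trestrict T (n k))) := by
  have hfront := hB.1
  have master : ∀ T : Set (Finset ℕ), IsUTree B Uc T → T ⊆ Ttil → ∀ k : ℕ,
      fh (Trestrict T (n k)) = f (maxBr T) ∩ Set.Iic k := by
    intro T hT hTs k
    obtain ⟨i, ⟨hip, hiA⟩, -⟩ := hA T hT hTs k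
    rw [hfh T hT hTs k i hip hiA]
    ext j
    simp only [Set.mem_inter_iff, Set.mem_Iic]
    constructor
    · rintro ⟨hj, hjk⟩
      exact ⟨(hstar T hT hTs k i hip hiA j hjk).mpr hj, hjk⟩
    · rintro ⟨hj, hjk⟩
      exact ⟨(hstar T hT hTs k i hip hiA j hjk).mp hj, hjk⟩
  have part1 : ∀ T : Set (Finset ℕ), IsUTree B Uc T → T ⊆ Ttil → ∀ k : ℕ,
      fh (Trestrict T (n k)) ⊆ Set.Iic k := by
    intro T hT hTs k
    rw [master T hT hTs k]
    exact Set.inter_subset_right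
  have part2 : ∀ T : Set (Finset ℕ), IsUTree B Uc T → T ⊆ Ttil → ∀ k l : ℕ, k ≤ l →
      fh (Trestrict T (n k)) = fh (Trestrict T (n l)) ∩ Set.Iic k := by
    intro T hT hTs k l hkl
    rw [master T hT hTs k, master T hT hTs l]
    ext j
    simp only [Set.mem_inter_iff, Set.mem_Iic]
    constructor
    · rintro ⟨h1, h2⟩
      exact ⟨⟨h1, h2.trans hkl⟩, h2⟩
    · rintro ⟨⟨h1, _⟩, h3⟩
      exact ⟨h1, h3⟩
  have part4 : ∀ T : Set (Finset ℕ), IsUTree B Uc T → T ⊆ Ttil →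
      f (maxBr T) = ⋃ k : ℕ, fh (Trestrict T (n k)) := by
    intro T hT hTs
    ext j
    simp only [Set.mem_iUnion]
    constructor
    · intro hj
      exact ⟨j, by rw [master T hT hTs j]; exact ⟨hj, le_refl j⟩⟩
    · rintro ⟨k, hk⟩
      rw [master T hT hTs k] at hk
      exact hk.1
  refine ⟨part1, part2, ?_, part4⟩
  intro S T hS hT hSs hTs k l hkl hsub
  have hST : Trestrict S (n k) ⊆ Trestrict T (n k) := fun b hb => ⟨(hsub hb).1, hb.2⟩
  obtain ⟨hR1tree, hR1rest⟩ := utree_BhatKI hfront hUc hTtil hS hSs (n k)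
  obtain ⟨hR2tree, hR2rest⟩ := utree_BhatKI hfront hUc hTtil hT hTs (n k)
  have hR1s : Ttil ∩ BhatKI B (n k) (Trestrict S (n k)) ⊆ Ttil := Set.inter_subset_left
  have hR2s : Ttil ∩ BhatKI B (n k) (Trestrict T (n k)) ⊆ Ttil := Set.inter_subset_left
  have hsub12 : Ttil ∩ BhatKI B (n k) (Trestrict S (n k)) ⊆
      Ttil ∩ BhatKI B (n k) (Trestrict T (n k)) :=
    Set.inter_subset_inter_right _ (BhatKI_mono B (n k) hST)
  have e1 : fh (Trestrict S (n k)) =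
      f (maxBr (Ttil ∩ BhatKI B (n k) (Trestrict S (n k)))) ∩ Set.Iic k := by
    have h := master _ hR1tree hR1s k
    rwa [hR1rest] at h
  have e2 : fh (Trestrict T (n k)) =
      f (maxBr (Ttil ∩ BhatKI B (n k) (Trestrict T (n k)))) ∩ Set.Iic k := by
    have h := master _ hR2tree hR2s k
    rwa [hR2rest] at h
  have hmax12 : maxBr (Ttil ∩ BhatKI B (n k) (Trestrict S (n k))) ⊆
      maxBr (Ttil ∩ BhatKI B (n k) (Trestrict T (n k))) := by
    rw [maxBr_utree hfront hUc hR1tree, maxBr_utree hfront hUc hR2tree]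
    exact Set.inter_subset_inter_left _ hsub12
  have step1 : fh (Trestrict S (n k)) ⊆ fh (Trestrict T (n k)) := by
    rw [e1, e2]
    exact Set.inter_subset_inter_left _ (hfmono _ _ hmax12)
  have step2 : fh (Trestrict T (n k)) ⊆ fh (Trestrict T (n l)) := by
    rw [part2 T hT hTs k l hkl]
    exact Set.inter_subset_left
  exact step1.trans step2
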